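/- Let P₁, …, Pₙ be pairwise disjoint non-empty open convex subsets of ℝ^d whose closures cover ℝ^d. Then each region Pᵢ is the solution set of at most n−1 strict linear (affine) inequalities; in particular each Pᵢ is the interior of a polyhedron with at most n−1 facets. -/

import Mathlib

open scoped RealInnerProductSpace

/-- An open set contained in the closure of an open convex nonempty set is contained in it. -/
lemma aux_open_subset_of_subset_closure {E : Type*} [NormedAddCommGroup E]
    [NormedSpace ℝ E] {s Q : Set E} (hs : Convex ℝ s) (hso : IsOpen s)
    (hsne : s.Nonempty) (hQ : IsOpen Q) (hQs : Q ⊆ closure s) : Q ⊆ s := by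
  intro x hx
  obtain ⟨y, hy⟩ := hsne
  obtain ⟨r, hr, hball⟩ := Metric.isOpen_iff.1 hQ x hx
  set ε : ℝ := r / (2 * (‖x - y‖ + 1)) with hε
  have hd : (0:ℝ) < ‖x - y‖ + 1 := by positivity
  have hεpos : 0 < ε := by positivity
  set z : E := x + ε • (x - y) with hz
  have hzQ : z ∈ Q := by
    apply hball
    simp only [Metric.mem_ball, dist_eq_norm, hz]
    have : x + ε • (x - y) - x = ε • (x - y) := by abel
    rw [this, norm_smul, Real.norm_eq_abs, abs_of_pos hεpos]
    calc ε * ‖x - y‖ ≤ ε * (‖x - y‖ + 1) := by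
          apply mul_le_mul_of_nonneg_left (by linarith) hεpos.le
      _ = r / 2 := by rw [hε]; field_simp
      _ < r := by linarith
  have hzcl : z ∈ closure s := hQs hzQ
  have hyi : y ∈ interior s := by rwa [hso.interior_eq]
  have hcombo : (ε / (1 + ε)) • y + (1 / (1 + ε)) • z ∈ interior s := by
    apply hs.combo_interior_closure_mem_interior hyi hzcl
      (by positivity) (by positivity)
    field_simp
    ring
  have hxeq : (ε / (1 + ε)) • y + (1 / (1 + ε)) • z = x := by
    have h1 : (1:ℝ) + ε ≠ 0 := by positivity
    rw [hz, smul_add, smul_smul, smul_sub]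
    match_scalars <;> field_simp <;> ring
  rw [hxeq] at hcombo
  exact interior_subset hcombo

/-- **Regions of a convex n-partition are polyhedral.**
If `P₁, …, Pₙ` are pairwise disjoint non-empty open convex subsets of `ℝ^d` whose closures
cover `ℝ^d`, then each region `Pᵢ` is the solution set of at most `n - 1` strict affine
inequalities (hence the interior of a polyhedron with at most `n - 1` facets). -/
theorem partition_regions_polyhedral
    (d n : ℕ) (P : Fin n → Set (EuclideanSpace ℝ (Fin d)))
    (hne : ∀ i, (P i).Nonempty)
    (hopen : ∀ i, IsOpen (P i))
    (hconv : ∀ i, Convex ℝ (P i))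
    (hdisj : Pairwise (Function.onFun Disjoint P))
    (hcover : (⋃ i, closure (P i)) = Set.univ) :
    ∀ i, ∃ (m : ℕ), m ≤ n - 1 ∧
      ∃ (a : Fin m → EuclideanSpace ℝ (Fin d)) (b : Fin m → ℝ),
        (∀ k, a k ≠ 0) ∧ P i = {x | ∀ k, ⟪a k, x⟫ < b k} := by
  intro i
  have hn : n ≠ 0 := by rintro rfl; exact i.elim0
  obtain ⟨m, rfl⟩ := Nat.exists_eq_succ_of_ne_zero hn
  have sep : ∀ k : Fin m, ∃ (a : EuclideanSpace ℝ (Fin d)) (b : ℝ),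
      a ≠ 0 ∧ (∀ x ∈ P i, ⟪a, x⟫ < b) ∧
      (∀ y ∈ closure (P (i.succAbove k)), b ≤ ⟪a, y⟫) := by
    intro k
    have hji : i.succAbove k ≠ i := Fin.succAbove_ne i k
    obtain ⟨f, u, hf1, hf2⟩ := geometric_hahn_banach_open (hconv i) (hopen i)
      (hconv (i.succAbove k)) (hdisj hji.symm)
    refine ⟨(InnerProductSpace.toDual ℝ _).symm f, u, ?_, ?_, ?_⟩
    · intro h0
      have hf0 : f = 0 := by
        have := (InnerProductSpace.toDual ℝ
          (EuclideanSpace ℝ (Fin d))).symm.injective (a₂ := 0) (by simpa using h0)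
        simpa using this
      obtain ⟨x₀, hx₀⟩ := hne i
      obtain ⟨y₀, hy₀⟩ := hne (i.succAbove k)
      have h1 := hf1 x₀ hx₀
      have h2 := hf2 y₀ hy₀
      rw [hf0] at h1 h2
      simp at h1 h2
      linarith
    · intro x hx
      rw [InnerProductSpace.toDual_symm_apply]
      exact hf1 x hx
    · intro y hy
      rw [InnerProductSpace.toDual_symm_apply]
      have hcl : closure (P (i.succAbove k)) ⊆ {y | u ≤ f y} :=
        closure_minimal (fun y hy => hf2 y hy)
          (isClosed_le continuous_const f.continuous)
      exact hcl hy
  choose a b ha h1 h2 using sep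
  refine ⟨m, by simp, a, b, ha, ?_⟩
  apply Set.Subset.antisymm
  · intro x hx k
    exact h1 k x hx
  · -- Q ⊆ closure (P i), then open ⇒ ⊆ P i
    have hQopen : IsOpen {x : EuclideanSpace ℝ (Fin d) | ∀ k, ⟪a k, x⟫ < b k} := by
      have : {x : EuclideanSpace ℝ (Fin d) | ∀ k, ⟪a k, x⟫ < b k}
          = ⋂ k, {x | ⟪a k, x⟫ < b k} := by ext x; simp
      rw [this]
      exact isOpen_iInter_of_finite fun k =>
        isOpen_lt (Continuous.inner continuous_const continuous_id) continuous_const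
    have hQcl : {x : EuclideanSpace ℝ (Fin d) | ∀ k, ⟪a k, x⟫ < b k} ⊆ closure (P i) := by
      intro x hx
      have hxu : x ∈ ⋃ j, closure (P j) := hcover ▸ Set.mem_univ x
      obtain ⟨j, hj⟩ := by simpa using hxu
      by_cases hji : j = i
      · exact hji ▸ hj
      · obtain ⟨k, hk⟩ := Fin.exists_succAbove_eq hji
        exfalso
        have := h2 k x (hk ▸ hj)
        exact absurd (hx k) (not_lt.mpr this)
    exact aux_open_subset_of_subset_closure (hconv i) (hopen i) (hne i) hQopen hQcl
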